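/- Every U(n+1)-orbit in the real Grassmannian of k-dimensional real subspaces of ℂ^{n+1} intersects the subset of subspaces contained in ℂ^n ⊂ ℂ^{n+1} nontrivially, provided n ≥ k. Consequently, the restriction map C(Gr^ℝ_k(ℂ^{n+1}))^{U(n+1)} → C(Gr^ℝ_k(ℂ^n))^{U(n)} on invariant continuous functions is injective. -/

import Mathlib

open Module

/-- The real subspace `ℂ^n ⊂ ℂ^{n+1}` (last complex coordinate zero), viewed as an
`ℝ`-submodule of `ℂ^{n+1}`. -/
noncomputable def lastCoordZero (n : ℕ) : Submodule ℝ (Fin (n + 1) → ℂ) :=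
  LinearMap.ker
    ((LinearMap.proj (Fin.last n) : (Fin (n + 1) → ℂ) →ₗ[ℂ] ℂ).restrictScalars ℝ)

/-- The action of a unitary matrix on real subspaces of `ℂ^{n+1}`. -/
noncomputable def unitaryMap (n : ℕ) (g : Matrix.unitaryGroup (Fin (n + 1)) ℂ)
    (W : Submodule ℝ (Fin (n + 1) → ℂ)) : Submodule ℝ (Fin (n + 1) → ℂ) :=
  Submodule.map
    ((Matrix.mulVecLin (g : Matrix (Fin (n + 1)) (Fin (n + 1)) ℂ)).restrictScalars ℝ) W

lemma aux_orbit_meets (n k : ℕ) (hk : k ≤ n) (W : Submodule ℝ (Fin (n + 1) → ℂ))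
    (hW : finrank ℝ W = k) :
    ∃ g : Matrix.unitaryGroup (Fin (n + 1)) ℂ, unitaryMap n g W ≤ lastCoordZero n := by
  classical
  set E := EuclideanSpace ℂ (Fin (n + 1))
  -- the complex span of W
  set V : Submodule ℂ E := Submodule.span ℂ (WithLp.toLp 2 '' (W : Set (Fin (n + 1) → ℂ))) with hVdef
  have hVle : finrank ℂ V ≤ k := by
    set b : Basis (Fin k) ℝ W := (finBasisOfFinrankEq ℝ W hW)
    set v : Fin k → E := fun i => WithLp.toLp 2 (b i : Fin (n+1) → ℂ) with hv
    set bv : Fin k → (Fin (n+1) → ℂ) := fun i => (b i : Fin (n+1) → ℂ) with hbv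
    have hWspan : (W : Set (Fin (n+1) → ℂ)) =
        (Submodule.span ℝ (Set.range bv) : Submodule ℝ (Fin (n+1) → ℂ)) := by
      have h1 : Submodule.map W.subtype ⊤ = W := by
        rw [Submodule.map_top, Submodule.range_subtype]
      have h2 : Submodule.map W.subtype (Submodule.span ℝ (Set.range b)) =
          Submodule.span ℝ (Set.range bv) := by
        rw [Submodule.map_span]
        congr 1
        rw [← Set.range_comp]
        rfl
      rw [← h1, ← b.span_eq, h2]
    have : V ≤ Submodule.span ℂ (Set.range v) := by
      rw [hVdef, Submodule.span_le]
      rintro _ ⟨x, hx, rfl⟩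
      rw [hWspan] at hx
      have hx2 := Submodule.mem_map_of_mem
        (f := ((WithLp.linearEquiv 2 ℝ (Fin (n+1) → ℂ)).symm : (Fin (n+1) → ℂ) →ₗ[ℝ] E)) hx
      rw [Submodule.map_span, ← Set.range_comp] at hx2
      exact Submodule.span_le_restrictScalars ℝ ℂ _ hx2
    exact (Submodule.finrank_mono this).trans
      ((finrank_range_le_card (R := ℂ) v).trans (by simp))
  have hVne : V ≠ ⊤ := by
    intro h
    have h1 : finrank ℂ V = n + 1 := by
      rw [h, finrank_top]
      simp [E, finrank_euclideanSpace_fin]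
    omega
  -- find a unit vector orthogonal to V
  have hVorth : Vᗮ ≠ ⊥ := by
    rwa [Ne, Submodule.orthogonal_eq_bot_iff]
  obtain ⟨u, huV, hu0⟩ := Submodule.exists_mem_ne_zero_of_ne_bot hVorth
  set v0 : E := (‖u‖ : ℂ)⁻¹ • u with hv0
  have hv0V : v0 ∈ Vᗮ := Submodule.smul_mem _ _ huV
  have hv0n : ‖v0‖ = 1 := norm_smul_inv_norm hu0
  -- orthonormal basis with last vector v0
  have hcard : finrank ℂ E = Fintype.card (Fin (n + 1)) := by
    simp [E, finrank_euclideanSpace_fin]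
  have horth : Orthonormal ℂ (({Fin.last n} : Set (Fin (n+1))).restrict (fun _ => v0)) := by
    constructor
    · intro i; exact hv0n
    · intro i j hij
      exact absurd (Subtype.ext (i.2.trans j.2.symm)) hij
  obtain ⟨b, hb⟩ := horth.exists_orthonormalBasis_extension_of_card_eq hcard
  have hblast : b (Fin.last n) = v0 := hb _ rfl
  -- the unitary matrix whose rows are conjugates of b
  set g : Matrix (Fin (n+1)) (Fin (n+1)) ℂ := fun i j => starRingEnd ℂ (b i j) with hg
  have hgmem : g ∈ Matrix.unitaryGroup (Fin (n+1)) ℂ := by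
    rw [Matrix.mem_unitaryGroup_iff]
    ext i j
    have := b.orthonormal
    rw [orthonormal_iff_ite] at this
    have h2 := this i j
    rw [PiLp.inner_apply] at h2
    simp only [Matrix.mul_apply, Matrix.star_apply, Matrix.one_apply]
    rw [← h2]
    apply Finset.sum_congr rfl
    intro x _
    simp [hg, RCLike.inner_apply, mul_comm]
  refine ⟨⟨g, hgmem⟩, ?_⟩
  rintro _ ⟨w, hwW, rfl⟩
  have hwV : (WithLp.toLp 2 w : E) ∈ V := Submodule.subset_span ⟨w, hwW, rfl⟩
  have hinner : (inner ℂ (b (Fin.last n)) (WithLp.toLp 2 w : E) : ℂ) = 0 := by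
    rw [hblast]
    exact (Submodule.mem_orthogonal' V v0).mp hv0V _ hwV
  rw [PiLp.inner_apply] at hinner
  simp only [lastCoordZero, LinearMap.mem_ker, LinearMap.restrictScalars_apply,
    LinearMap.proj_apply, Matrix.mulVecLin_apply]
  show (g.mulVec w) (Fin.last n) = 0
  rw [Matrix.mulVec, dotProduct]
  rw [← hinner]
  apply Finset.sum_congr rfl
  intro x _
  simp [hg, mul_comm]

lemma aux_finrank_unitaryMap (n : ℕ) (g : Matrix.unitaryGroup (Fin (n + 1)) ℂ)
    (W : Submodule ℝ (Fin (n + 1) → ℂ)) :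
    finrank ℝ (unitaryMap n g W) = finrank ℝ W := by
  have hg1 : (g : Matrix (Fin (n+1)) (Fin (n+1)) ℂ) * star (g : Matrix (Fin (n+1)) (Fin (n+1)) ℂ) = 1 :=
    Matrix.mem_unitaryGroup_iff.mp g.2
  have hg2 : star (g : Matrix (Fin (n+1)) (Fin (n+1)) ℂ) * (g : Matrix (Fin (n+1)) (Fin (n+1)) ℂ) = 1 :=
    Matrix.mem_unitaryGroup_iff'.mp g.2
  set e : (Fin (n+1) → ℂ) ≃ₗ[ℝ] (Fin (n+1) → ℂ) :=
    LinearEquiv.ofLinear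
      ((Matrix.mulVecLin (g : Matrix (Fin (n + 1)) (Fin (n + 1)) ℂ)).restrictScalars ℝ)
      ((Matrix.mulVecLin (star (g : Matrix (Fin (n + 1)) (Fin (n + 1)) ℂ))).restrictScalars ℝ)
      (LinearMap.ext fun x => by
        simp only [LinearMap.comp_apply, LinearMap.restrictScalars_apply, Matrix.mulVecLin_apply, LinearMap.id_apply]; rw [Matrix.mulVec_mulVec, hg1, Matrix.one_mulVec])
      (LinearMap.ext fun x => by
        simp only [LinearMap.comp_apply, LinearMap.restrictScalars_apply, Matrix.mulVecLin_apply, LinearMap.id_apply]; rw [Matrix.mulVec_mulVec, hg2, Matrix.one_mulVec]) with he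
  have : unitaryMap n g W = Submodule.map (e : (Fin (n+1) → ℂ) →ₗ[ℝ] (Fin (n+1) → ℂ)) W := rfl
  rw [this, LinearEquiv.finrank_map_eq]

/-- for `n ≥ k`, every `U(n+1)`-orbit in the Grassmannian of real
`k`-dimensional subspaces of `ℂ^{n+1}` meets the set of subspaces contained in
`ℂ^n ⊂ ℂ^{n+1}`; consequently the restriction map on `U(n+1)`-invariant functions on
`Gr^ℝ_k(ℂ^{n+1})` to functions on `Gr^ℝ_k(ℂ^n)` is injective. -/
theorem unitary_orbits_meet_hyperplane_grassmannian (n k : ℕ) (hk : k ≤ n) :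
    (∀ W : Submodule ℝ (Fin (n + 1) → ℂ), finrank ℝ W = k →
      ∃ g : Matrix.unitaryGroup (Fin (n + 1)) ℂ, unitaryMap n g W ≤ lastCoordZero n)
    ∧ (∀ f f' : Submodule ℝ (Fin (n + 1) → ℂ) → ℝ,
        (∀ (g : Matrix.unitaryGroup (Fin (n + 1)) ℂ) (W : Submodule ℝ (Fin (n + 1) → ℂ)),
          f (unitaryMap n g W) = f W) →
        (∀ (g : Matrix.unitaryGroup (Fin (n + 1)) ℂ) (W : Submodule ℝ (Fin (n + 1) → ℂ)),
          f' (unitaryMap n g W) = f' W) →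
        (∀ W : Submodule ℝ (Fin (n + 1) → ℂ), finrank ℝ W = k →
          W ≤ lastCoordZero n → f W = f' W) →
        ∀ W : Submodule ℝ (Fin (n + 1) → ℂ), finrank ℝ W = k → f W = f' W) := by
  refine ⟨aux_orbit_meets n k hk, ?_⟩
  intro f f' hf hf' hrestr W hW
  obtain ⟨g, hg⟩ := aux_orbit_meets n k hk W hW
  have hfr : finrank ℝ (unitaryMap n g W) = k := (aux_finrank_unitaryMap n g W).trans hW
  calc f W = f (unitaryMap n g W) := (hf g W).symm
    _ = f' (unitaryMap n g W) := hrestr _ hfr hg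
    _ = f' W := hf' g W
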